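/- For n = 2d with d odd, the multiplicities in the decomposition Sym^2(C^{2d}) ≅ a V_0^+ ⊕ b V_0^- ⊕ c V_1^+ ⊕ e V_1^- into d-dimensional H_{2d}-modules are a = b = c = (d+1)/2 and e = (d-1)/2; in particular dim W_0^+ = dim W_0^- = dim W_1^+ = d(d+1)/2 and dim W_1^- = d(d-1)/2. -/

import Mathlib

open Module MvPolynomial

noncomputable def sigmaPoly (n : ℕ) :
    MvPolynomial (ZMod n) ℂ →ₐ[ℂ] MvPolynomial (ZMod n) ℂ :=
  MvPolynomial.rename (fun j => j - 1)

noncomputable def tauPoly (n : ℕ) :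
    MvPolynomial (ZMod n) ℂ →ₐ[ℂ] MvPolynomial (ZMod n) ℂ :=
  MvPolynomial.aeval
    (fun j : ZMod n => (Complex.exp (2 * Real.pi * Complex.I / n) ^ j.val) • MvPolynomial.X j)

noncomputable def Wlpm (d l : ℕ) (e : ℂ) : Submodule ℂ (MvPolynomial (ZMod (2 * d)) ℂ) :=
  Submodule.span ℂ
    { p | ∃ i j : ZMod (2 * d), (i + j).val % 2 = l ∧
        p = X i * X j + e • (X (i + (d : ZMod (2 * d))) * X (j + (d : ZMod (2 * d)))) }

def DecomposesInto (d : ℕ) (W : Submodule ℂ (MvPolynomial (ZMod (2 * d)) ℂ)) (k : ℕ) : Prop :=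
  ∃ f : Fin k → Submodule ℂ (MvPolynomial (ZMod (2 * d)) ℂ),
    iSupIndep f ∧ (⨆ i, f i) = W ∧
    ∀ i, Module.finrank ℂ (f i) = d ∧
      (∀ p ∈ f i, sigmaPoly (2 * d) p ∈ f i) ∧ (∀ p ∈ f i, tauPoly (2 * d) p ∈ f i)

section Aux
variable (d : ℕ)

/-- the basic generator. -/
noncomputable def auxP (e : ℂ) (i j : ZMod (2 * d)) : MvPolynomial (ZMod (2 * d)) ℂ :=
  X i * X j + e • (X (i + (d : ZMod (2 * d))) * X (j + (d : ZMod (2 * d))))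

variable {d}

lemma auxP_comm (e : ℂ) (i j : ZMod (2 * d)) : auxP d e i j = auxP d e j i := by
  unfold auxP; rw [mul_comm (X i) (X j), mul_comm (X (i + _)) (X (j + _))]

lemma dd_zero : ((d : ZMod (2 * d)) + d) = 0 := by
  have : ((2 * d : ℕ) : ZMod (2 * d)) = 0 := ZMod.natCast_self _
  push_cast at this
  linear_combination this

lemma auxP_shift {e : ℂ} (he : e = 1 ∨ e = -1) (i j : ZMod (2 * d)) :
    auxP d e (i + d) (j + d) = e • auxP d e i j := by
  have h1 : ∀ a : ZMod (2 * d), a + d + d = a := by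
    intro a; rw [add_assoc, dd_zero, add_zero]
  have he2 : e * e = 1 := by rcases he with h | h <;> simp [h]
  unfold auxP
  rw [h1 i, h1 j, smul_add, smul_smul, he2, one_smul, add_comm]

lemma sigma_auxP (e : ℂ) (i j : ZMod (2 * d)) :
    sigmaPoly (2 * d) (auxP d e i j) = auxP d e (i - 1) (j - 1) := by
  unfold sigmaPoly auxP
  rw [map_add, map_mul, map_smul, map_mul, rename_X, rename_X, rename_X, rename_X]
  congr 2 <;> ring_nf

/-- the monomial exponent of `x_a x_b`. -/
noncomputable def auxμ (a b : ZMod (2 * d)) : ZMod (2 * d) →₀ ℕ :=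
  Finsupp.single a 1 + Finsupp.single b 1

lemma auxμ_comm (a b : ZMod (2 * d)) : auxμ a b = auxμ b a := add_comm _ _

lemma auxμ_eq {a b c f : ZMod (2 * d)} :
    auxμ a b = auxμ c f ↔ (a = c ∧ b = f) ∨ (a = f ∧ b = c) := by
  unfold auxμ
  rw [Finsupp.single_add_single_eq_single_add_single (one_ne_zero) (one_ne_zero)]
  simp

lemma X_mul_X (a b : ZMod (2 * d)) :
    (X a * X b : MvPolynomial (ZMod (2 * d)) ℂ) = monomial (auxμ a b) 1 := by
  rw [X, X, monomial_mul, one_mul]; rfl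

lemma coeff_auxP (e : ℂ) (i j : ZMod (2 * d)) (M : ZMod (2 * d) →₀ ℕ) :
    coeff M (auxP d e i j) =
      (if auxμ i j = M then 1 else 0) +
        (if auxμ (i + (d : ZMod (2 * d))) (j + (d : ZMod (2 * d))) = M then e else 0) := by
  unfold auxP
  rw [coeff_add, coeff_smul, X_mul_X, X_mul_X, coeff_monomial, coeff_monomial, smul_eq_mul,
    mul_ite, mul_one, mul_zero]

/-- components. -/
noncomputable def auxComp (e : ℂ) (r : ZMod (2 * d)) :
    Submodule ℂ (MvPolynomial (ZMod (2 * d)) ℂ) :=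
  Submodule.span ℂ (Set.range fun i : Fin d => auxP d e ((i : ℕ) : ZMod (2 * d))
    (((i : ℕ) : ZMod (2 * d)) + r))

lemma mem_auxComp (hd : 0 < d) {e : ℂ} (he : e = 1 ∨ e = -1) (r : ZMod (2 * d))
    (i : ZMod (2 * d)) : auxP d e i (i + r) ∈ auxComp e r := by
  haveI : NeZero (2 * d) := ⟨by omega⟩
  have hvi : i.val < 2 * d := ZMod.val_lt i
  have hcast : ((i.val : ℕ) : ZMod (2 * d)) = i := by
    rw [ZMod.natCast_val, ZMod.cast_id]
  by_cases h : i.val < d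
  · exact Submodule.subset_span ⟨⟨i.val, h⟩, by simp [hcast]⟩
  · set i₀ : Fin d := ⟨i.val - d, by omega⟩ with hi₀
    have hieq : ((i₀ : ℕ) : ZMod (2 * d)) + d = i := by
      rw [← hcast]; push_cast [hi₀]
      rw [Nat.cast_sub (by omega)]; ring
    have := auxP_shift he (((i₀ : ℕ) : ZMod (2 * d))) ((((i₀ : ℕ)) : ZMod (2 * d)) + r)
    rw [show (((i₀ : ℕ) : ZMod (2 * d)) + r + d) = ((i₀ : ℕ) : ZMod (2 * d)) + d + r by ring,
      hieq] at this
    rw [this]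
    exact Submodule.smul_mem _ _ (Submodule.subset_span ⟨i₀, rfl⟩)


lemma cast_eq_split {N x y : ℕ} (hN : 0 < N) (hx : x < 2 * N) (hy : y < 2 * N)
    (hxy : (x : ZMod N) = y) : x = y ∨ x + N = y ∨ y + N = x := by
  haveI : NeZero N := ⟨hN.ne'⟩
  rw [ZMod.natCast_eq_natCast_iff] at hxy
  rcases le_total x y with h | h
  · obtain ⟨c, hc⟩ := (Nat.modEq_iff_dvd' h).mp hxy
    match c, hc with
    | 0, hc => left; omega
    | 1, hc => right; left; omega
    | (c+2), hc =>
      exfalso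
      have h2 : N * 2 ≤ N * (c + 2) := Nat.mul_le_mul_left N (by omega)
      have h3 : N * 2 ≤ y - x := hc ▸ h2
      omega
  · obtain ⟨c, hc⟩ := (Nat.modEq_iff_dvd' h).mp hxy.symm
    match c, hc with
    | 0, hc => left; omega
    | 1, hc => right; right; omega
    | (c+2), hc =>
      exfalso
      have h2 : N * 2 ≤ N * (c + 2) := Nat.mul_le_mul_left N (by omega)
      have h3 : N * 2 ≤ x - y := hc ▸ h2
      omega

lemma cast_eq_join {N x y : ℕ} (h : x = y ∨ x + N = y ∨ y + N = x) : (x : ZMod N) = y := by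
  rcases h with rfl | h | h
  · rfl
  · rw [← h]; push_cast; simp [ZMod.natCast_self]
  · rw [← h]; push_cast; simp [ZMod.natCast_self]

lemma eps_pow_n (hd : 0 < d) :
    Complex.exp (2 * Real.pi * Complex.I / ((2 * d : ℕ) : ℂ)) ^ (2 * d) = 1 := by
  have hne : ((2 * d : ℕ) : ℂ) ≠ 0 := Nat.cast_ne_zero.mpr (by omega)
  rw [← Complex.exp_nat_mul]
  rw [show ((2 * d : ℕ) : ℂ) * (2 * Real.pi * Complex.I / ((2 * d : ℕ) : ℂ))
      = 2 * Real.pi * Complex.I by rw [mul_comm, div_mul_cancel₀ _ hne]]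
  exact Complex.exp_two_pi_mul_I

lemma eps_pow_congr (hd : 0 < d) {x y : ℕ} (h : x % (2 * d) = y % (2 * d)) :
    Complex.exp (2 * Real.pi * Complex.I / ((2 * d : ℕ) : ℂ)) ^ x =
    Complex.exp (2 * Real.pi * Complex.I / ((2 * d : ℕ) : ℂ)) ^ y := by
  set ε := Complex.exp (2 * Real.pi * Complex.I / ((2 * d : ℕ) : ℂ)) with hε
  have hmod : ∀ z : ℕ, ε ^ z = ε ^ (z % (2 * d)) := by
    intro z
    conv_lhs => rw [← Nat.div_add_mod z (2 * d)]
    rw [pow_add, pow_mul, eps_pow_n hd, one_pow, one_mul]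
  rw [hmod x, hmod y, h]

lemma tau_auxP (hd : 0 < d) (e : ℂ) (i j : ZMod (2 * d)) :
    tauPoly (2 * d) (auxP d e i j) =
      (Complex.exp (2 * Real.pi * Complex.I / ((2 * d : ℕ) : ℂ)) ^ (i.val + j.val)) •
        auxP d e i j := by
  haveI : NeZero (2 * d) := ⟨by omega⟩
  set ε := Complex.exp (2 * Real.pi * Complex.I / ((2 * d : ℕ) : ℂ)) with hε
  have key : ((i + (d : ZMod (2 * d))).val + (j + (d : ZMod (2 * d))).val) % (2 * d)
      = (i.val + j.val) % (2 * d) := by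
    have hdv : ((d : ZMod (2 * d))).val = d := by
      rw [ZMod.val_natCast, Nat.mod_eq_of_lt (by omega)]
    rw [ZMod.val_add, ZMod.val_add, hdv]
    have h1 : (i.val + d) % (2 * d) ≡ i.val + d [MOD 2 * d] := Nat.mod_modEq _ _
    have h2 : (j.val + d) % (2 * d) ≡ j.val + d [MOD 2 * d] := Nat.mod_modEq _ _
    have h3 := h1.add h2
    have h4 : (i.val + d + (j.val + d)) % (2 * d) = (i.val + j.val) % (2 * d) := by
      rw [show i.val + d + (j.val + d) = i.val + j.val + 2 * d by ring, Nat.add_mod_right]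
    exact h3.trans h4
  have keyε : ε ^ ((i + (d : ZMod (2 * d))).val + (j + (d : ZMod (2 * d))).val)
      = ε ^ (i.val + j.val) := eps_pow_congr hd key
  unfold tauPoly auxP
  rw [map_add, map_mul, map_smul, map_mul, aeval_X, aeval_X, aeval_X, aeval_X]
  rw [smul_mul_smul_comm, smul_mul_smul_comm, ← pow_add, ← pow_add, ← hε, keyε, smul_add,
    smul_comm e]


section Master
variable (hd : 0 < d) {e : ℂ} (he : e = 1 ∨ e = -1) {k l : ℕ} (rep : Fin k → ℕ)
variable (h1 : ∀ m, rep m ≤ d) (hinj : ∀ m m', rep m = rep m' → m = m')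
variable (hneg : ∀ m m', (rep m + rep m' = 0 ∨ rep m + rep m' = 2 * d) → m = m')

include hd h1 hinj hneg in
lemma cond_one (m m' : Fin k) (i i' : Fin d) :
    auxμ ((i' : ℕ) : ZMod (2 * d)) (((i' : ℕ) : ZMod (2 * d)) + ((rep m' : ℕ) : ZMod (2 * d)))
      = auxμ ((i : ℕ) : ZMod (2 * d)) (((i : ℕ) : ZMod (2 * d)) + ((rep m : ℕ) : ZMod (2 * d)))
    ↔ (m = m' ∧ i = i') := by
  have hb1 : (i : ℕ) < d := i.isLt
  have hb2 : (i' : ℕ) < d := i'.isLt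
  have hb3 := h1 m
  have hb4 := h1 m'
  rw [auxμ_eq]
  constructor
  · rintro (⟨ha, hb⟩ | ⟨ha, hb⟩)
    · have ha' : ((i' : ℕ) : ZMod (2 * d)) = ((i : ℕ) : ZMod (2 * d)) := ha
      have hb' : (((i' : ℕ) + rep m' : ℕ) : ZMod (2 * d)) = (((i : ℕ) + rep m : ℕ) : ZMod (2 * d)) := by
        push_cast; exact hb
      have A := cast_eq_split (by omega) (show (i' : ℕ) < 2 * (2 * d) by omega)
        (show (i : ℕ) < 2 * (2 * d) by omega) ha'
      have B := cast_eq_split (by omega) (show (i' : ℕ) + rep m' < 2 * (2 * d) by omega)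
        (show (i : ℕ) + rep m < 2 * (2 * d) by omega) hb'
      have hm : m = m' := hinj _ _ (by omega)
      exact ⟨hm, Fin.ext (by omega)⟩
    · have ha' : ((i' : ℕ) : ZMod (2 * d)) = (((i : ℕ) + rep m : ℕ) : ZMod (2 * d)) := by
        push_cast; exact ha
      have hb' : (((i' : ℕ) + rep m' : ℕ) : ZMod (2 * d)) = ((i : ℕ) : ZMod (2 * d)) := by
        push_cast; exact hb
      have A := cast_eq_split (by omega) (show (i' : ℕ) < 2 * (2 * d) by omega)
        (show (i : ℕ) + rep m < 2 * (2 * d) by omega) ha'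
      have B := cast_eq_split (by omega) (show (i' : ℕ) + rep m' < 2 * (2 * d) by omega)
        (show (i : ℕ) < 2 * (2 * d) by omega) hb'
      have hsum : rep m + rep m' = 0 ∨ rep m + rep m' = 2 * d := by omega
      have hm : m = m' := hneg _ _ hsum
      subst hm
      have h0 : rep m = 0 := by omega
      exact ⟨rfl, Fin.ext (by omega)⟩
  · rintro ⟨rfl, rfl⟩
    exact Or.inl ⟨rfl, rfl⟩

include hd h1 hinj hneg in
lemma cond_two (m m' : Fin k) (i i' : Fin d) :
    auxμ (((i' : ℕ) : ZMod (2 * d)) + (d : ZMod (2 * d)))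
      (((i' : ℕ) : ZMod (2 * d)) + ((rep m' : ℕ) : ZMod (2 * d)) + (d : ZMod (2 * d)))
      = auxμ ((i : ℕ) : ZMod (2 * d)) (((i : ℕ) : ZMod (2 * d)) + ((rep m : ℕ) : ZMod (2 * d)))
    ↔ (m = m' ∧ i = i' ∧ rep m = d) := by
  have hb1 : (i : ℕ) < d := i.isLt
  have hb2 : (i' : ℕ) < d := i'.isLt
  have hb3 := h1 m
  have hb4 := h1 m'
  rw [auxμ_eq]
  constructor
  · rintro (⟨ha, hb⟩ | ⟨ha, hb⟩)
    · have ha' : (((i' : ℕ) + d : ℕ) : ZMod (2 * d)) = ((i : ℕ) : ZMod (2 * d)) := by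
        push_cast; exact ha
      have A := cast_eq_split (by omega) (show (i' : ℕ) + d < 2 * (2 * d) by omega)
        (show (i : ℕ) < 2 * (2 * d) by omega) ha'
      exact absurd A (by omega)
    · have ha' : (((i' : ℕ) + d : ℕ) : ZMod (2 * d)) = (((i : ℕ) + rep m : ℕ) : ZMod (2 * d)) := by
        push_cast; exact ha
      have hb' : (((i' : ℕ) + rep m' + d : ℕ) : ZMod (2 * d)) = ((i : ℕ) : ZMod (2 * d)) := by
        push_cast; exact hb
      have A := cast_eq_split (by omega) (show (i' : ℕ) + d < 2 * (2 * d) by omega)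
        (show (i : ℕ) + rep m < 2 * (2 * d) by omega) ha'
      have B := cast_eq_split (by omega) (show (i' : ℕ) + rep m' + d < 2 * (2 * d) by omega)
        (show (i : ℕ) < 2 * (2 * d) by omega) hb'
      have hsum : rep m + rep m' = 0 ∨ rep m + rep m' = 2 * d := by omega
      have hm : m = m' := hneg _ _ hsum
      subst hm
      have hrd : rep m = d := by omega
      exact ⟨rfl, Fin.ext (by omega), hrd⟩
  · rintro ⟨rfl, rfl, hrd⟩
    refine Or.inr ⟨?_, ?_⟩
    · rw [hrd]
    · rw [hrd, add_assoc, dd_zero, add_zero]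

include hd h1 hinj hneg in
lemma coeff_key (m m' : Fin k) (i i' : Fin d) :
    coeff (auxμ ((i : ℕ) : ZMod (2 * d)) (((i : ℕ) : ZMod (2 * d)) + ((rep m : ℕ) : ZMod (2 * d))))
      (auxP d e ((i' : ℕ) : ZMod (2 * d)) (((i' : ℕ) : ZMod (2 * d)) + ((rep m' : ℕ) : ZMod (2 * d))))
    = if m = m' ∧ i = i' then (if rep m = d then 1 + e else 1) else 0 := by
  rw [coeff_auxP, if_congr (cond_one hd rep h1 hinj hneg m m' i i') rfl rfl,
    if_congr (cond_two hd rep h1 hinj hneg m m' i i') rfl rfl]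
  by_cases hmi : m = m' ∧ i = i'
  · rcases hmi with ⟨rfl, rfl⟩
    by_cases hrd : rep m = d <;> simp [hrd]
  · rw [if_neg hmi, if_neg (by tauto), if_neg (by tauto), add_zero]


/-- the total family. -/
noncomputable def auxV (e : ℂ) (rep : Fin k → ℕ) :
    Fin k × Fin d → MvPolynomial (ZMod (2 * d)) ℂ :=
  fun p => auxP d e ((p.2 : ℕ) : ZMod (2 * d))
    (((p.2 : ℕ) : ZMod (2 * d)) + ((rep p.1 : ℕ) : ZMod (2 * d)))

include hd h1 hinj hneg in
lemma aux_li (hde : ∀ m, rep m = d → e = 1) :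
    LinearIndependent ℂ (auxV (d := d) e rep) := by
  classical
  rw [Fintype.linearIndependent_iff]
  intro g hg p
  obtain ⟨m, i⟩ := p
  have hc := congrArg
    (coeff (auxμ ((i : ℕ) : ZMod (2 * d))
      (((i : ℕ) : ZMod (2 * d)) + ((rep m : ℕ) : ZMod (2 * d))))) hg
  simp only [coeff_sum, coeff_smul, coeff_zero] at hc
  have hc2 : ∑ q : Fin k × Fin d,
      g q • (if m = q.1 ∧ i = q.2 then (if rep m = d then 1 + e else 1) else (0 : ℂ)) = 0 := by
    refine Eq.trans (Finset.sum_congr rfl fun q _ =>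
      congrArg (fun z => g q • z) (coeff_key hd rep h1 hinj hneg m q.1 i q.2).symm) hc
  rw [Finset.sum_eq_single (m, i)] at hc2
  · have hne : (if rep m = d then 1 + e else 1 : ℂ) ≠ 0 := by
      by_cases hrd : rep m = d
      · rw [if_pos hrd, hde m hrd]; norm_num
      · rw [if_neg hrd]; exact one_ne_zero
    simp only [if_pos (⟨rfl, rfl⟩ : m = m ∧ i = i), smul_eq_mul] at hc2
    exact (mul_eq_zero.mp hc2).resolve_right hne
  · rintro ⟨m', i'⟩ _ hne
    rw [if_neg, smul_zero]
    rintro ⟨rfl, rfl⟩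
    exact hne rfl
  · intro h; exact absurd (Finset.mem_univ _) h


include hd he h1 hinj hneg in
lemma master (hde : ∀ m, rep m = d → e = 1) (h2 : ∀ m, rep m % 2 = l)
    (hsurj : ∀ r : ZMod (2 * d), r.val % 2 = l →
      (∃ m, ((rep m : ℕ) : ZMod (2 * d)) = r ∨ ((rep m : ℕ) : ZMod (2 * d)) = -r) ∨
        (r = (d : ZMod (2 * d)) ∧ e = -1)) :
    (∃ f : Fin k → Submodule ℂ (MvPolynomial (ZMod (2 * d)) ℂ),
      iSupIndep f ∧ (⨆ i, f i) = Wlpm d l e ∧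
      ∀ i, Module.finrank ℂ (f i) = d ∧
        (∀ p ∈ f i, sigmaPoly (2 * d) p ∈ f i) ∧ (∀ p ∈ f i, tauPoly (2 * d) p ∈ f i)) ∧
    Module.finrank ℂ (Wlpm d l e) = d * k := by
  classical
  haveI : NeZero (2 * d) := ⟨by omega⟩
  have hli : LinearIndependent ℂ (auxV (d := d) e rep) := aux_li hd rep h1 hinj hneg hde
  set v := auxV (d := d) e rep with hv
  set f : Fin k → Submodule ℂ (MvPolynomial (ZMod (2 * d)) ℂ) :=
    fun m => auxComp e ((rep m : ℕ) : ZMod (2 * d)) with hf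
  have hfm : ∀ m, f m = Submodule.span ℂ (v '' {p | p.1 = m}) := by
    intro m
    rw [hf]
    show Submodule.span ℂ _ = _
    congr 1
    ext x
    constructor
    · rintro ⟨i, rfl⟩; exact ⟨(m, i), rfl, rfl⟩
    · rintro ⟨⟨m', i⟩, hp, rfl⟩
      have : m' = m := hp
      subst this
      exact ⟨i, rfl⟩
  -- the sup equals Wlpm
  have hsup : (⨆ m, f m) = Wlpm d l e := by
    apply le_antisymm
    · refine iSup_le fun m => ?_
      rw [hf]
      refine Submodule.span_le.mpr ?_
      rintro x ⟨i, rfl⟩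
      apply Submodule.subset_span
      refine ⟨((i : ℕ) : ZMod (2 * d)),
        ((i : ℕ) : ZMod (2 * d)) + ((rep m : ℕ) : ZMod (2 * d)), ?_, rfl⟩
      have hc : ((((i : ℕ) : ZMod (2 * d)) + (((i : ℕ) : ZMod (2 * d)) +
          ((rep m : ℕ) : ZMod (2 * d))))) = (((i : ℕ) + ((i : ℕ) + rep m) : ℕ) : ZMod (2 * d)) := by
        push_cast; ring
      rw [hc, ZMod.val_natCast, Nat.mod_mod_of_dvd _ ⟨d, rfl⟩]
      have := h2 m
      omega
    · refine Submodule.span_le.mpr ?_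
      rintro p ⟨i, j, hpar, rfl⟩
      show auxP d e i j ∈ _
      set r := j - i with hr
      have hj : j = i + r := by rw [hr]; ring
      have hrpar : r.val % 2 = l := by
        have e1 : (i + j) = r + (i + i) := by rw [hr]; ring
        have e2 : (r + (i + i)).val = (r.val + (i + i).val) % (2 * d) := ZMod.val_add _ _
        have e3 : (i + i).val = (i.val + i.val) % (2 * d) := ZMod.val_add _ _
        rw [e1, e2, Nat.mod_mod_of_dvd _ ⟨d, rfl⟩, Nat.add_mod, e3,
          Nat.mod_mod_of_dvd _ ⟨d, rfl⟩] at hpar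
        omega
      rcases hsurj r hrpar with ⟨m, hm | hm⟩ | ⟨hrd, hme⟩
      · have hrw : auxP d e i j = auxP d e i (i + ((rep m : ℕ) : ZMod (2 * d))) := by
          rw [hj, hm]
        rw [hrw]
        exact le_iSup f m (mem_auxComp hd he _ i)
      · have hji : i = j + ((rep m : ℕ) : ZMod (2 * d)) := by rw [hm, hr]; ring
        have hrw : auxP d e i j = auxP d e j (j + ((rep m : ℕ) : ZMod (2 * d))) := by
          rw [auxP_comm, ← hji]
        rw [hrw]
        exact le_iSup f m (mem_auxComp hd he _ j)
      · have hj' : j = i + (d : ZMod (2 * d)) := by rw [hj, hrd]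
        have hidd : i + (d : ZMod (2 * d)) + d = i := by rw [add_assoc, dd_zero, add_zero]
        have hzero : auxP d e i j = 0 := by
          rw [hj', auxP, hme, hidd, neg_smul, one_smul,
            mul_comm (X (i + (d : ZMod (2 * d)))) (X i)]
          exact add_neg_cancel _
        rw [hzero]
        exact zero_mem _
  -- independence
  have hindep : iSupIndep f := by
    intro m
    have hd2 : (⨆ m', ⨆ _ : m' ≠ m, f m') ≤ Submodule.span ℂ (v '' {p | p.1 ≠ m}) := by
      refine iSup_le fun m' => iSup_le fun hm' => ?_
      rw [hfm m']
      refine Submodule.span_mono (Set.image_mono fun p hp => ?_)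
      simp only [Set.mem_setOf_eq] at hp ⊢
      rw [hp]; exact hm'
    exact Disjoint.mono (hfm m).le hd2
      (hli.disjoint_span_image (Set.disjoint_left.mpr fun p hp hp' => hp' hp))
  -- ranks and invariance
  have hrank : ∀ m, Module.finrank ℂ (f m) = d := by
    intro m
    have hcomp : LinearIndependent ℂ (v ∘ fun i : Fin d => (m, i)) :=
      hli.comp _ (fun a b h => (Prod.mk.injEq _ _ _ _).mp h |>.2)
    have hre : f m = Submodule.span ℂ (Set.range (v ∘ fun i : Fin d => (m, i))) := rfl
    rw [hre, finrank_span_eq_card hcomp, Fintype.card_fin]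
  have hsig : ∀ m, ∀ p ∈ f m, sigmaPoly (2 * d) p ∈ f m := by
    intro m p hp
    have hmap : Submodule.map (sigmaPoly (2 * d)).toLinearMap (f m) ≤ f m := by
      rw [hf]
      show Submodule.map _ (Submodule.span ℂ _) ≤ _
      rw [Submodule.map_span]
      refine Submodule.span_le.mpr ?_
      rintro x ⟨y, ⟨i, rfl⟩, rfl⟩
      show sigmaPoly (2 * d) (auxP d e _ _) ∈ _
      rw [sigma_auxP]
      rw [show ((((i : ℕ) : ZMod (2 * d)) + ((rep m : ℕ) : ZMod (2 * d))) - 1)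
        = (((i : ℕ) : ZMod (2 * d)) - 1) + ((rep m : ℕ) : ZMod (2 * d)) by ring]
      exact mem_auxComp hd he _ _
    exact hmap ⟨p, hp, rfl⟩
  have htau : ∀ m, ∀ p ∈ f m, tauPoly (2 * d) p ∈ f m := by
    intro m p hp
    have hmap : Submodule.map (tauPoly (2 * d)).toLinearMap (f m) ≤ f m := by
      rw [hf]
      show Submodule.map _ (Submodule.span ℂ _) ≤ _
      rw [Submodule.map_span]
      refine Submodule.span_le.mpr ?_
      rintro x ⟨y, ⟨i, rfl⟩, rfl⟩
      show tauPoly (2 * d) (auxP d e _ _) ∈ _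
      rw [tau_auxP hd]
      exact Submodule.smul_mem _ _ (Submodule.subset_span ⟨i, rfl⟩)
    exact hmap ⟨p, hp, rfl⟩
  -- total rank
  have htot : Module.finrank ℂ (Wlpm d l e) = d * k := by
    have hun : (⋃ m, v '' {p | p.1 = m}) = Set.range v := by
      ext x
      simp only [Set.mem_iUnion, Set.mem_image, Set.mem_setOf_eq, Set.mem_range]
      constructor
      · rintro ⟨m, p, hp, rfl⟩; exact ⟨p, rfl⟩
      · rintro ⟨p, rfl⟩; exact ⟨p.1, p, rfl, rfl⟩
    have : Wlpm d l e = Submodule.span ℂ (Set.range v) := by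
      rw [← hsup, ← hun, Submodule.span_iUnion]
      exact iSup_congr hfm
    rw [this, finrank_span_eq_card hli, Fintype.card_prod, Fintype.card_fin, Fintype.card_fin,
      Nat.mul_comm]
  exact ⟨⟨f, hindep, hsup, fun m => ⟨hrank m, hsig m, htau m⟩⟩, htot⟩


end Master

lemma cast_neg_helper (hd : 0 < d) {r : ZMod (2 * d)} {a : ℕ} (h : a + r.val = 2 * d) :
    ((a : ℕ) : ZMod (2 * d)) = -r := by
  haveI : NeZero (2 * d) := ⟨by omega⟩
  have hvt : ((r.val : ℕ) : ZMod (2 * d)) = r := by rw [ZMod.natCast_val, ZMod.cast_id]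
  have key : ((a : ℕ) : ZMod (2 * d)) + r = 0 := by
    rw [← hvt, ← Nat.cast_add, h, ZMod.natCast_self]
  linear_combination key

lemma cast_val_id' (hd : 0 < d) (r : ZMod (2 * d)) : ((r.val : ℕ) : ZMod (2 * d)) = r := by
  haveI : NeZero (2 * d) := ⟨by omega⟩
  rw [ZMod.natCast_val, ZMod.cast_id]

end Aux

theorem multiplicities_d_odd (d : ℕ) (hd : 0 < d) (hodd : Odd d) :
    DecomposesInto d (Wlpm d 0 1) ((d + 1) / 2) ∧
    DecomposesInto d (Wlpm d 0 (-1)) ((d + 1) / 2) ∧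
    DecomposesInto d (Wlpm d 1 1) ((d + 1) / 2) ∧
    DecomposesInto d (Wlpm d 1 (-1)) ((d - 1) / 2) ∧
    Module.finrank ℂ (Wlpm d 0 1) = d * (d + 1) / 2 ∧
    Module.finrank ℂ (Wlpm d 0 (-1)) = d * (d + 1) / 2 ∧
    Module.finrank ℂ (Wlpm d 1 1) = d * (d + 1) / 2 ∧
    Module.finrank ℂ (Wlpm d 1 (-1)) = d * (d - 1) / 2 := by
  have hodd' : d % 2 = 1 := Nat.odd_iff.mp hodd
  haveI : NeZero (2 * d) := ⟨by omega⟩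
  have hdivp : d * (d + 1) / 2 = d * ((d + 1) / 2) :=
    Nat.mul_div_assoc d (by omega)
  have hdivm : d * (d - 1) / 2 = d * ((d - 1) / 2) :=
    Nat.mul_div_assoc d (by omega)
  -- case l = 0 (both signs)
  have hsurj0 : ∀ r : ZMod (2 * d), r.val % 2 = 0 →
      (∃ m : Fin ((d + 1) / 2), ((2 * (m : ℕ) : ℕ) : ZMod (2 * d)) = r ∨
        ((2 * (m : ℕ) : ℕ) : ZMod (2 * d)) = -r) := by
    intro r hp
    have hvt := cast_val_id' hd r
    have hlt : r.val < 2 * d := ZMod.val_lt r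
    by_cases hc : r.val < d
    · refine ⟨⟨r.val / 2, by omega⟩, Or.inl ?_⟩
      show ((2 * (r.val / 2) : ℕ) : ZMod (2 * d)) = r
      rw [show 2 * (r.val / 2) = r.val by omega, hvt]
    · refine ⟨⟨(2 * d - r.val) / 2, by omega⟩, Or.inr ?_⟩
      show ((2 * ((2 * d - r.val) / 2) : ℕ) : ZMod (2 * d)) = -r
      rw [show 2 * ((2 * d - r.val) / 2) = 2 * d - r.val by omega]
      exact cast_neg_helper hd (by omega)
  have case0 : ∀ e : ℂ, (e = 1 ∨ e = -1) →
      DecomposesInto d (Wlpm d 0 e) ((d + 1) / 2) ∧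
        Module.finrank ℂ (Wlpm d 0 e) = d * ((d + 1) / 2) := by
    intro e he
    have H := master (l := 0) hd he (fun m : Fin ((d + 1) / 2) => 2 * (m : ℕ))
      (fun m => by have := m.isLt; omega)
      (fun m m' h => Fin.ext (by omega))
      (fun m m' h => Fin.ext (by have := m.isLt; have := m'.isLt; omega))
      (fun m h => absurd h (by have := m.isLt; omega))
      (fun m => by omega)
      (fun r hr => Or.inl (hsurj0 r hr))
    exact ⟨H.1, H.2⟩
  -- case l = 1, e = 1
  have hsurj1p : ∀ r : ZMod (2 * d), r.val % 2 = 1 →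
      (∃ m : Fin ((d + 1) / 2), ((2 * (m : ℕ) + 1 : ℕ) : ZMod (2 * d)) = r ∨
        ((2 * (m : ℕ) + 1 : ℕ) : ZMod (2 * d)) = -r) := by
    intro r hp
    have hvt := cast_val_id' hd r
    have hlt : r.val < 2 * d := ZMod.val_lt r
    by_cases hc : r.val ≤ d
    · refine ⟨⟨(r.val - 1) / 2, by omega⟩, Or.inl ?_⟩
      show ((2 * ((r.val - 1) / 2) + 1 : ℕ) : ZMod (2 * d)) = r
      rw [show 2 * ((r.val - 1) / 2) + 1 = r.val by omega, hvt]
    · refine ⟨⟨(2 * d - r.val - 1) / 2, by omega⟩, Or.inr ?_⟩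
      show ((2 * ((2 * d - r.val - 1) / 2) + 1 : ℕ) : ZMod (2 * d)) = -r
      rw [show 2 * ((2 * d - r.val - 1) / 2) + 1 = 2 * d - r.val by omega]
      exact cast_neg_helper hd (by omega)
  have case1p : DecomposesInto d (Wlpm d 1 1) ((d + 1) / 2) ∧
      Module.finrank ℂ (Wlpm d 1 1) = d * ((d + 1) / 2) := by
    have H := master (l := 1) hd (Or.inl rfl) (fun m : Fin ((d + 1) / 2) => 2 * (m : ℕ) + 1)
      (fun m => by have := m.isLt; omega)
      (fun m m' h => Fin.ext (by omega))
      (fun m m' h => Fin.ext (by have := m.isLt; have := m'.isLt; omega))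
      (fun m h => rfl)
      (fun m => by omega)
      (fun r hr => Or.inl (hsurj1p r hr))
    exact ⟨H.1, H.2⟩
  -- case l = 1, e = -1
  have hsurj1m : ∀ r : ZMod (2 * d), r.val % 2 = 1 →
      (∃ m : Fin ((d - 1) / 2), ((2 * (m : ℕ) + 1 : ℕ) : ZMod (2 * d)) = r ∨
        ((2 * (m : ℕ) + 1 : ℕ) : ZMod (2 * d)) = -r) ∨
        (r = (d : ZMod (2 * d)) ∧ (-1 : ℂ) = -1) := by
    intro r hp
    have hvt := cast_val_id' hd r
    have hlt : r.val < 2 * d := ZMod.val_lt r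
    by_cases hsd : r.val = d
    · exact Or.inr ⟨by rw [← hvt, hsd], rfl⟩
    left
    by_cases hc : r.val ≤ d
    · refine ⟨⟨(r.val - 1) / 2, by omega⟩, Or.inl ?_⟩
      show ((2 * ((r.val - 1) / 2) + 1 : ℕ) : ZMod (2 * d)) = r
      rw [show 2 * ((r.val - 1) / 2) + 1 = r.val by omega, hvt]
    · refine ⟨⟨(2 * d - r.val - 1) / 2, by omega⟩, Or.inr ?_⟩
      show ((2 * ((2 * d - r.val - 1) / 2) + 1 : ℕ) : ZMod (2 * d)) = -r
      rw [show 2 * ((2 * d - r.val - 1) / 2) + 1 = 2 * d - r.val by omega]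
      exact cast_neg_helper hd (by omega)
  have case1m : DecomposesInto d (Wlpm d 1 (-1)) ((d - 1) / 2) ∧
      Module.finrank ℂ (Wlpm d 1 (-1)) = d * ((d - 1) / 2) := by
    have H := master (l := 1) hd (Or.inr rfl) (fun m : Fin ((d - 1) / 2) => 2 * (m : ℕ) + 1)
      (fun m => by have := m.isLt; omega)
      (fun m m' h => Fin.ext (by omega))
      (fun m m' h => Fin.ext (by have := m.isLt; have := m'.isLt; omega))
      (fun m h => absurd h (by have := m.isLt; omega))
      (fun m => by omega)
      hsurj1m
    exact ⟨H.1, H.2⟩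
  obtain ⟨c0p, r0p⟩ := case0 1 (Or.inl rfl)
  obtain ⟨c0m, r0m⟩ := case0 (-1) (Or.inr rfl)
  exact ⟨c0p, c0m, case1p.1, case1m.1, by rw [hdivp]; exact r0p, by rw [hdivp]; exact r0m,
    by rw [hdivp]; exact case1p.2, by rw [hdivm]; exact case1m.2⟩
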